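/- Let F be an algebraically closed field of characteristic 3. Then the F𝔖_3-module Lie_F(3) ⊗ Lie_F(3)^* (with diagonal 𝔖_3-action on the tensor product, and contragredient dual) is not isomorphic to a permutation F𝔖_3-module. In particular, Lie_F(3) is not an endo-permutation F𝔖_3-module. -/

import Mathlib

open TensorProduct

set_option synthInstance.maxHeartbeats 1000000
set_option maxHeartbeats 1000000

/-- The partial Dynkin–Specht–Wever element `(1-c_2)(1-c_3)⋯(1-c_m)` inside `F𝔖_n`,
where `c_k` is the backward cycle `(k, k-1, …, 2, 1)` of `𝔖_n` (in zero-based indexing,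
`c_k` is the inverse of `Fin.cycleRange (k-1)`). -/
noncomputable def dswPartial (F : Type*) [Field F] (n m : ℕ) :
    MonoidAlgebra F (Equiv.Perm (Fin n)) :=
  (((List.finRange n).take m).tail.map
    (fun j => (1 : MonoidAlgebra F (Equiv.Perm (Fin n))) -
      MonoidAlgebra.of F (Equiv.Perm (Fin n)) (Fin.cycleRange j)⁻¹)).prod

/-- The Dynkin–Specht–Wever element `ω_n = (1-c_2)(1-c_3)⋯(1-c_n) ∈ F𝔖_n`; `ω_1 = 1`. -/
noncomputable def dsw (F : Type*) [Field F] (n : ℕ) :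
    MonoidAlgebra F (Equiv.Perm (Fin n)) :=
  dswPartial F n n

/-- The underlying `F`-vector space of the Lie module `Lie_F(n) = F𝔖_n·ω_n`. -/
noncomputable abbrev lieSpace (F : Type*) [Field F] (n : ℕ) :=
  ↥((Submodule.span (MonoidAlgebra F (Equiv.Perm (Fin n))) {dsw F n}).restrictScalars F)

/-- The Lie module `Lie_F(n)` as a representation of `𝔖_n`: the symmetric group acts on
the left ideal `F𝔖_n·ω_n` by left multiplication. -/
noncomputable def lieRep (F : Type*) [Field F] (n : ℕ) :
    Representation F (Equiv.Perm (Fin n)) (lieSpace F n) where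
  toFun g :=
    { toFun := fun x => ⟨MonoidAlgebra.of F (Equiv.Perm (Fin n)) g *
        (x : MonoidAlgebra F (Equiv.Perm (Fin n))),
        by simpa [smul_eq_mul] using
          (Submodule.span (MonoidAlgebra F (Equiv.Perm (Fin n))) {dsw F n}).smul_mem
            (MonoidAlgebra.of F (Equiv.Perm (Fin n)) g) x.2⟩
      map_add' := by intro x y; ext; simp [mul_add]
      map_smul' := by intro c x; ext; simp [Algebra.mul_smul_comm] }
  map_one' := by ext x; simp
  map_mul' g h := by ext x; simp [mul_assoc, map_mul]

/-- The permutation `FG`-module `F[X]` attached to an action of `G` on `X` by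
permutations: the free `F`-module on `X`, with `G` permuting the basis. -/
noncomputable def permRep (F G X : Type*) [Field F] [Group G] (act : G →* Equiv.Perm X) :
    Representation F G (X →₀ F) where
  toFun g := Finsupp.lmapDomain F F (act g)
  map_one' := by ext x; simp
  map_mul' g h := by
    ext x
    simp [Finsupp.mapDomain_comp, Equiv.Perm.mul_apply]

/-- Two representations are isomorphic if there is an equivariant linear equivalence. -/
def RepIso {F G V W : Type*} [Field F] [Group G] [AddCommGroup V] [Module F V]
    [AddCommGroup W] [Module F W] (ρ : Representation F G V) (τ : Representation F G W) :
    Prop :=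
  ∃ e : V ≃ₗ[F] W, ∀ (g : G) (v : V), e (ρ g v) = τ g (e v)

namespace L3
variable (F : Type*) [Field F]

def ps : Equiv.Perm (Fin 3) := (Fin.cycleRange (1 : Fin 3))⁻¹
def pr : Equiv.Perm (Fin 3) := (Fin.cycleRange (2 : Fin 3))⁻¹
def pt : Equiv.Perm (Fin 3) := ps * pr
def pu : Equiv.Perm (Fin 3) := pr * ps
def pc : Equiv.Perm (Fin 3) := pr * pr

noncomputable def og (g : Equiv.Perm (Fin 3)) : MonoidAlgebra F (Equiv.Perm (Fin 3)) :=
  MonoidAlgebra.of F (Equiv.Perm (Fin 3)) g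

lemma og_mul (g h : Equiv.Perm (Fin 3)) : og F g * og F h = og F (g * h) :=
  (map_mul (MonoidAlgebra.of F (Equiv.Perm (Fin 3))) g h).symm

lemma og_one : og F 1 = 1 := map_one (MonoidAlgebra.of F (Equiv.Perm (Fin 3)))

noncomputable def ω : MonoidAlgebra F (Equiv.Perm (Fin 3)) := dsw F 3
noncomputable def w2e : MonoidAlgebra F (Equiv.Perm (Fin 3)) := og F pr * ω F

lemma w2e_def : og F pr * ω F = w2e F := rfl

lemma omega_eq : ω F = 1 - og F pr - og F ps + og F pt := by
  have h : ((List.finRange 3).take 3).tail = [(1 : Fin 3), 2] := by decide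
  rw [ω, dsw, dswPartial, h]
  simp only [List.map_cons, List.map_nil, List.prod_cons, List.prod_nil, mul_one]
  rw [show (1 - MonoidAlgebra.of F (Equiv.Perm (Fin 3)) (Fin.cycleRange (1:Fin 3))⁻¹) = 1 - og F ps from rfl,
      show (1 - MonoidAlgebra.of F (Equiv.Perm (Fin 3)) (Fin.cycleRange (2:Fin 3))⁻¹) = 1 - og F pr from rfl]
  rw [sub_mul, mul_sub, mul_sub, one_mul, mul_one, og_mul]
  rw [show ps * pr = pt from rfl]
  simp only [one_mul, mul_one]
  abel

lemma w2e_eq : w2e F = og F pr - og F pc - og F pu + og F ps := by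
  rw [w2e, omega_eq, mul_add, mul_sub, mul_sub, mul_one, og_mul, og_mul, og_mul]
  rw [show pr * pr = pc from rfl, show pr * ps = pu from rfl,
      show pr * pt = ps by decide]

lemma s_omega : og F ps * ω F = -ω F := by
  rw [omega_eq, mul_add, mul_sub, mul_sub, mul_one, og_mul, og_mul, og_mul]
  rw [show ps * ps = 1 by decide, show ps * pr = pt from rfl,
      show ps * pt = pr by decide, og_one]
  abel

lemma s_w2e : og F ps * w2e F = ω F + w2e F := by
  rw [w2e_eq, omega_eq, mul_add, mul_sub, mul_sub, og_mul, og_mul, og_mul, og_mul]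
  rw [show ps * ps = 1 by decide, show ps * pr = pt from rfl,
      show ps * pc = pu by decide, show ps * pu = pc by decide, og_one]
  abel

lemma r_w2e : og F pr * w2e F = -ω F - w2e F := by
  rw [w2e_eq, omega_eq, mul_add, mul_sub, mul_sub, og_mul, og_mul, og_mul, og_mul]
  rw [show pr * pr = pc from rfl, show pr * ps = pu from rfl,
      show pr * pc = 1 by decide, show pr * pu = pt by decide, og_one]
  abel

lemma all_g : ∀ g : Equiv.Perm (Fin 3),
    g = 1 ∨ g = ps ∨ g = pr ∨ g = pt ∨ g = pu ∨ g = pc := by decide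

lemma og_mul_omega (g : Equiv.Perm (Fin 3)) :
    ∃ a b : F, og F g * ω F = a • ω F + b • w2e F := by
  rcases all_g g with h | h | h | h | h | h <;> subst h
  · exact ⟨1, 0, by rw [og_one, one_mul]; module⟩
  · exact ⟨-1, 0, by rw [s_omega]; module⟩
  · exact ⟨0, 1, by rw [w2e_def]; module⟩
  · refine ⟨1, 1, ?_⟩
    rw [pt, ← og_mul, mul_assoc, w2e_def, s_w2e]; module
  · refine ⟨0, -1, ?_⟩
    rw [pu, ← og_mul, mul_assoc, s_omega, mul_neg, w2e_def]; module
  · refine ⟨-1, -1, ?_⟩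
    rw [pc, ← og_mul, mul_assoc, w2e_def, r_w2e]; module

lemma mul_omega_span (x : MonoidAlgebra F (Equiv.Perm (Fin 3))) :
    ∃ a b : F, x * ω F = a • ω F + b • w2e F := by
  induction x using MonoidAlgebra.induction_linear with
  | zero => exact ⟨0, 0, by simp⟩
  | add x y hx hy =>
      obtain ⟨a, b, hab⟩ := hx; obtain ⟨c, d, hcd⟩ := hy
      exact ⟨a + c, b + d, by rw [add_mul, hab, hcd]; module⟩
  | single g cc =>
      obtain ⟨a, b, hab⟩ := og_mul_omega F g
      refine ⟨cc * a, cc * b, ?_⟩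
      have h : (MonoidAlgebra.single g cc : MonoidAlgebra F (Equiv.Perm (Fin 3))) = cc • og F g := by
        simp [og, MonoidAlgebra.of_apply, MonoidAlgebra.smul_single]
      rw [h, smul_mul_assoc, hab]; module

lemma omega_apply_one : (ω F).coeff (1 : Equiv.Perm (Fin 3)) = 1 := by
  rw [omega_eq, og, og, og, MonoidAlgebra.of_apply, MonoidAlgebra.of_apply,
    MonoidAlgebra.of_apply, MonoidAlgebra.one_def]
  simp only [MonoidAlgebra.coeff_add, MonoidAlgebra.coeff_sub, MonoidAlgebra.coeff_single]
  rw [Finsupp.add_apply, Finsupp.sub_apply, Finsupp.sub_apply, Finsupp.single_eq_same,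
    Finsupp.single_eq_of_ne' (show pr ≠ (1 : Equiv.Perm (Fin 3)) by decide),
    Finsupp.single_eq_of_ne' (show ps ≠ (1 : Equiv.Perm (Fin 3)) by decide),
    Finsupp.single_eq_of_ne' (show pt ≠ (1 : Equiv.Perm (Fin 3)) by decide)]
  ring

lemma omega_apply_r : (ω F).coeff pr = -1 := by
  rw [omega_eq, og, og, og, MonoidAlgebra.of_apply, MonoidAlgebra.of_apply,
    MonoidAlgebra.of_apply, MonoidAlgebra.one_def]
  simp only [MonoidAlgebra.coeff_add, MonoidAlgebra.coeff_sub, MonoidAlgebra.coeff_single]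
  rw [Finsupp.add_apply, Finsupp.sub_apply, Finsupp.sub_apply, Finsupp.single_eq_same,
    Finsupp.single_eq_of_ne' (show (1 : Equiv.Perm (Fin 3)) ≠ pr by decide),
    Finsupp.single_eq_of_ne' (show ps ≠ pr by decide),
    Finsupp.single_eq_of_ne' (show pt ≠ pr by decide)]
  ring

lemma w2e_apply_one : (w2e F).coeff (1 : Equiv.Perm (Fin 3)) = 0 := by
  rw [w2e_eq, og, og, og, og, MonoidAlgebra.of_apply, MonoidAlgebra.of_apply,
    MonoidAlgebra.of_apply, MonoidAlgebra.of_apply]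
  simp only [MonoidAlgebra.coeff_add, MonoidAlgebra.coeff_sub, MonoidAlgebra.coeff_single]
  rw [Finsupp.add_apply, Finsupp.sub_apply, Finsupp.sub_apply,
    Finsupp.single_eq_of_ne' (show pr ≠ (1 : Equiv.Perm (Fin 3)) by decide),
    Finsupp.single_eq_of_ne' (show pc ≠ (1 : Equiv.Perm (Fin 3)) by decide),
    Finsupp.single_eq_of_ne' (show pu ≠ (1 : Equiv.Perm (Fin 3)) by decide),
    Finsupp.single_eq_of_ne' (show ps ≠ (1 : Equiv.Perm (Fin 3)) by decide)]
  ring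

lemma w2e_apply_r : (w2e F).coeff pr = 1 := by
  rw [w2e_eq, og, og, og, og, MonoidAlgebra.of_apply, MonoidAlgebra.of_apply,
    MonoidAlgebra.of_apply, MonoidAlgebra.of_apply]
  simp only [MonoidAlgebra.coeff_add, MonoidAlgebra.coeff_sub, MonoidAlgebra.coeff_single]
  rw [Finsupp.add_apply, Finsupp.sub_apply, Finsupp.sub_apply, Finsupp.single_eq_same,
    Finsupp.single_eq_of_ne' (show pc ≠ pr by decide),
    Finsupp.single_eq_of_ne' (show pu ≠ pr by decide),
    Finsupp.single_eq_of_ne' (show ps ≠ pr by decide)]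
  ring

lemma indep_coeff {a b : F} (h : a • ω F + b • w2e F = 0) : a = 0 ∧ b = 0 := by
  have h1 : (a • ω F + b • w2e F).coeff (1 : Equiv.Perm (Fin 3)) = (0 : MonoidAlgebra F (Equiv.Perm (Fin 3))).coeff 1 := by rw [h]
  have h2 : (a • ω F + b • w2e F).coeff pr = (0 : MonoidAlgebra F (Equiv.Perm (Fin 3))).coeff pr := by rw [h]
  rw [MonoidAlgebra.coeff_add, Finsupp.add_apply, MonoidAlgebra.coeff_smul, MonoidAlgebra.coeff_smul,
    Finsupp.smul_apply, Finsupp.smul_apply, omega_apply_one,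
    w2e_apply_one] at h1
  rw [MonoidAlgebra.coeff_add, Finsupp.add_apply, MonoidAlgebra.coeff_smul, MonoidAlgebra.coeff_smul,
    Finsupp.smul_apply, Finsupp.smul_apply, omega_apply_r,
    w2e_apply_r] at h2
  simp at h1 h2
  constructor
  · exact h1
  · rw [h1] at h2; simpa using h2

noncomputable def W1 : lieSpace F 3 :=
  ⟨ω F, by simpa [ω] using Submodule.mem_span_singleton_self (R := MonoidAlgebra F (Equiv.Perm (Fin 3))) (dsw F 3)⟩

noncomputable def W2 : lieSpace F 3 :=
  ⟨w2e F, by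
    simp only [Submodule.restrictScalars_mem]
    rw [w2e, ← smul_eq_mul]
    exact Submodule.smul_mem _ _ (Submodule.mem_span_singleton_self (dsw F 3))⟩

lemma exists_coeffs (v : lieSpace F 3) : ∃ a b : F, v = a • W1 F + b • W2 F := by
  have hv : (v : MonoidAlgebra F (Equiv.Perm (Fin 3))) ∈
      Submodule.span (MonoidAlgebra F (Equiv.Perm (Fin 3))) {dsw F 3} := v.2
  rw [Submodule.mem_span_singleton] at hv
  obtain ⟨x, hx⟩ := hv
  obtain ⟨a, b, hab⟩ := mul_omega_span F x
  refine ⟨a, b, Subtype.ext ?_⟩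
  have : (((a • W1 F + b • W2 F : lieSpace F 3)) : MonoidAlgebra F (Equiv.Perm (Fin 3)))
      = a • ω F + b • w2e F := rfl
  rw [this, ← hab, ← hx, smul_eq_mul]
  rfl

lemma coeff_unique {a b c d : F} (h : a • W1 F + b • W2 F = c • W1 F + d • W2 F) :
    a = c ∧ b = d := by
  have h' : (a - c) • ω F + (b - d) • w2e F = 0 := by
    have := congrArg (fun v : lieSpace F 3 => (v : MonoidAlgebra F (Equiv.Perm (Fin 3)))) h
    have h2 : (a : F) • ω F + b • w2e F = c • ω F + d • w2e F := this
    rw [sub_smul, sub_smul]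
    rw [show (a • ω F - c • ω F) + (b • w2e F - d • w2e F)
        = (a • ω F + b • w2e F) - (c • ω F + d • w2e F) by abel, h2, sub_self]
  obtain ⟨h1, h2⟩ := indep_coeff F h'
  exact ⟨sub_eq_zero.mp h1, sub_eq_zero.mp h2⟩

lemma lieRep_coe (g : Equiv.Perm (Fin 3)) (x : lieSpace F 3) :
    ((lieRep F 3 g x : lieSpace F 3) : MonoidAlgebra F (Equiv.Perm (Fin 3)))
      = MonoidAlgebra.of F (Equiv.Perm (Fin 3)) g * (x : MonoidAlgebra F (Equiv.Perm (Fin 3))) :=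
  rfl

lemma rep_s_W1 : lieRep F 3 ps (W1 F) = -W1 F := Subtype.ext <| by
  rw [lieRep_coe]
  show og F ps * ω F = _
  rw [s_omega]; rfl

lemma rep_s_W2 : lieRep F 3 ps (W2 F) = W1 F + W2 F := Subtype.ext <| by
  rw [lieRep_coe]
  show og F ps * w2e F = _
  rw [s_w2e]; rfl

lemma rep_r_W1 : lieRep F 3 pr (W1 F) = W2 F := Subtype.ext <| by
  rw [lieRep_coe]; rfl

lemma rep_r_W2 : lieRep F 3 pr (W2 F) = -W1 F - W2 F := Subtype.ext <| by
  rw [lieRep_coe]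
  show og F pr * w2e F = _
  rw [r_w2e]; rfl

lemma W_li : LinearIndependent F ![W1 F, W2 F] := by
  rw [LinearIndependent.pair_iff]
  intro a b hab
  have : a • W1 F + b • W2 F = (0 : F) • W1 F + (0 : F) • W2 F := by
    rw [hab]; simp
  exact coeff_unique F this

noncomputable def B : Module.Basis (Fin 2) F (lieSpace F 3) :=
  Module.Basis.mk (W_li F) (by
    intro v _
    obtain ⟨a, b, hab⟩ := exists_coeffs F v
    have h0 : (![W1 F, W2 F] : Fin 2 → lieSpace F 3) 0 = W1 F := rfl
    have h1 : (![W1 F, W2 F] : Fin 2 → lieSpace F 3) 1 = W2 F := rfl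
    rw [hab]
    exact Submodule.add_mem _
      (Submodule.smul_mem _ a (Submodule.subset_span ⟨0, h0⟩))
      (Submodule.smul_mem _ b (Submodule.subset_span ⟨1, h1⟩)))

lemma finrank_lie : Module.finrank F (lieSpace F 3) = 2 := by
  rw [Module.finrank_eq_card_basis (B F)]
  simp

instance : Module.Finite F (lieSpace F 3) := Module.Finite.of_basis (B F)

lemma comm_scalar (f : lieSpace F 3 →ₗ[F] lieSpace F 3)
    (hc : ∀ (g : Equiv.Perm (Fin 3)) (w : lieSpace F 3),
      lieRep F 3 g (f w) = f (lieRep F 3 g w)) :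
    ∃ a : F, f = a • (LinearMap.id : lieSpace F 3 →ₗ[F] lieSpace F 3) := by
  obtain ⟨a, b, hab⟩ := exists_coeffs F (f (W1 F))
  obtain ⟨c, d, hcd⟩ := exists_coeffs F (f (W2 F))
  -- from s acting on W1 : b = 0
  have e1 : lieRep F 3 ps (f (W1 F)) = f (lieRep F 3 ps (W1 F)) := hc ps (W1 F)
  rw [rep_s_W1, map_neg, hab, map_add, map_smul, map_smul, rep_s_W1, rep_s_W2] at e1
  have e1' : (b - a) • W1 F + b • W2 F = (-a) • W1 F + (-b) • W2 F := by
    have l : (b - a) • W1 F + b • W2 F = a • (-W1 F) + b • (W1 F + W2 F) := by module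
    rw [l, e1]; module
  obtain ⟨hb1, hb2⟩ := coeff_unique F e1'
  have hb : b = 0 := by linear_combination hb1
  -- from r acting on W1 : c = 0, d = a
  have e2 : lieRep F 3 pr (f (W1 F)) = f (lieRep F 3 pr (W1 F)) := hc pr (W1 F)
  rw [rep_r_W1, hab, map_add, map_smul, map_smul, rep_r_W1, rep_r_W2, hcd] at e2
  have e2' : (-b) • W1 F + (a - b) • W2 F = c • W1 F + d • W2 F := by
    have l : (-b) • W1 F + (a - b) • W2 F = a • W2 F + b • (-W1 F - W2 F) := by module
    rw [l, e2]
  obtain ⟨hc1, hd1⟩ := coeff_unique F e2'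
  refine ⟨a, ?_⟩
  apply LinearMap.ext
  intro w
  obtain ⟨p, q, hpq⟩ := exists_coeffs F w
  rw [hpq, map_add, map_smul, map_smul, hab, hcd, ← hc1, ← hd1, hb]
  simp only [LinearMap.smul_apply, LinearMap.id_apply]
  module

lemma fixed_is_scalar (f : lieSpace F 3 →ₗ[F] lieSpace F 3)
    (hf : ∀ g : Equiv.Perm (Fin 3), ((lieRep F 3).linHom (lieRep F 3)) g f = f) :
    ∃ a : F, f = a • (LinearMap.id : lieSpace F 3 →ₗ[F] lieSpace F 3) := by
  apply comm_scalar
  intro g w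
  have h := hf g
  rw [Representation.linHom_apply] at h
  have h2 := congrArg (fun φ : lieSpace F 3 →ₗ[F] lieSpace F 3 => φ (lieRep F 3 g w)) h
  simp only [LinearMap.comp_apply] at h2
  have hcanc : lieRep F 3 g⁻¹ (lieRep F 3 g w) = w := by
    rw [← Module.End.mul_apply, ← map_mul, inv_mul_cancel, map_one, Module.End.one_apply]
  rw [hcanc] at h2
  exact h2

lemma perm_contradiction {X : Type} [Finite X]
    (act : Equiv.Perm (Fin 3) →* Equiv.Perm X)
    (e : (lieSpace F 3 →ₗ[F] lieSpace F 3) ≃ₗ[F] (X →₀ F))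
    (he : ∀ (g : Equiv.Perm (Fin 3)) (v : lieSpace F 3 →ₗ[F] lieSpace F 3),
      e (((lieRep F 3).linHom (lieRep F 3)) g v) = permRep F (Equiv.Perm (Fin 3)) X act g (e v)) :
    False := by
  classical
  letI : Fintype X := Fintype.ofFinite X
  have hcard : Fintype.card X = 4 := by
    have h1 : Module.finrank F (lieSpace F 3 →ₗ[F] lieSpace F 3) = 4 := by
      rw [Module.finrank_linearMap F F (lieSpace F 3) (lieSpace F 3), finrank_lie]
    have h2 := LinearEquiv.finrank_eq (R := F) (M := lieSpace F 3 →ₗ[F] lieSpace F 3) (N := X →₀ F) e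
    rw [h1, Module.finrank_finsupp_self] at h2
    omega
  letI : MulAction (Equiv.Perm (Fin 3)) X := MulAction.compHom X act
  have hsmul : ∀ (g : Equiv.Perm (Fin 3)) (z : X), g • z = act g z := fun _ _ => rfl
  have hx0 : Nonempty X := Fintype.card_pos_iff.mp (by omega)
  obtain ⟨x0⟩ := hx0
  -- there is a point outside the orbit of x0
  have hex : ∃ y : X, y ∉ MulAction.orbit (Equiv.Perm (Fin 3)) x0 := by
    by_contra hall
    push_neg at hall
    have horb : MulAction.orbit (Equiv.Perm (Fin 3)) x0 = Set.univ :=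
      Set.eq_univ_of_forall hall
    haveI : Fintype ↥(MulAction.orbit (Equiv.Perm (Fin 3)) x0) := Fintype.ofFinite _
    haveI : Fintype ↥(MulAction.stabilizer (Equiv.Perm (Fin 3)) x0) := Fintype.ofFinite _
    have hos := MulAction.card_orbit_mul_card_stabilizer_eq_card_group (Equiv.Perm (Fin 3)) x0
    have h6 : Fintype.card (Equiv.Perm (Fin 3)) = 6 := by
      rw [Fintype.card_perm]; rfl
    have h4 : Fintype.card ↥(MulAction.orbit (Equiv.Perm (Fin 3)) x0) = 4 := by
      have : Nat.card ↥(MulAction.orbit (Equiv.Perm (Fin 3)) x0) = Nat.card X := by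
        rw [horb]
        exact Nat.card_congr (Equiv.Set.univ X)
      rw [Nat.card_eq_fintype_card, Nat.card_eq_fintype_card] at this
      rw [this, hcard]
    have hpos : 0 < Fintype.card ↥(MulAction.stabilizer (Equiv.Perm (Fin 3)) x0) :=
      Fintype.card_pos_iff.mpr ⟨1⟩
    rw [h4, h6] at hos
    omega
  obtain ⟨y, hy⟩ := hex
  -- indicator vectors of the two orbits
  haveI : Fintype ↥(MulAction.orbit (Equiv.Perm (Fin 3)) x0) := Fintype.ofFinite _
  haveI : Fintype ↥(MulAction.orbit (Equiv.Perm (Fin 3)) y) := Fintype.ofFinite _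
  set O1 : Finset X := (MulAction.orbit (Equiv.Perm (Fin 3)) x0).toFinset with hO1
  set O2 : Finset X := (MulAction.orbit (Equiv.Perm (Fin 3)) y).toFinset with hO2
  have hstep : ∀ (x : X) (g : Equiv.Perm (Fin 3)) (z : X),
      z ∈ MulAction.orbit (Equiv.Perm (Fin 3)) x → act g z ∈ MulAction.orbit (Equiv.Perm (Fin 3)) x := by
    intro x g z hz
    obtain ⟨h, rfl⟩ := hz
    rw [← hsmul, smul_smul]
    exact MulAction.mem_orbit x (g * h)
  have hfixS : ∀ S : Finset X, (∀ (g : Equiv.Perm (Fin 3)) (z : X), z ∈ S → act g z ∈ S) →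
      ∀ g : Equiv.Perm (Fin 3),
        permRep F (Equiv.Perm (Fin 3)) X act g (∑ z ∈ S, Finsupp.single z (1 : F))
          = ∑ z ∈ S, Finsupp.single z (1 : F) := by
    intro S hS g
    rw [map_sum]
    have happ : ∀ z : X, permRep F (Equiv.Perm (Fin 3)) X act g (Finsupp.single z (1 : F))
        = Finsupp.single (act g z) (1 : F) := by
      intro z
      show Finsupp.lmapDomain F F (act g) (Finsupp.single z (1 : F)) = _
      simp [Finsupp.mapDomain_single]
    simp_rw [happ]
    refine Finset.sum_nbij' (fun z => act g z) (fun z => act g⁻¹ z)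
      (fun a ha => hS g a ha) (fun a ha => hS g⁻¹ a ha) ?_ ?_ ?_
    · intro a _; simp [map_inv]
    · intro a _; simp [map_inv]
    · intro a _; rfl
  have hval : ∀ (S : Finset X) (w : X),
      (∑ z ∈ S, Finsupp.single z (1 : F)) w = if w ∈ S then 1 else 0 := by
    intro S w
    rw [Finsupp.finset_sum_apply]
    simp [Finsupp.single_apply, Finset.sum_ite_eq']
  have hS1 : ∀ (g : Equiv.Perm (Fin 3)) (z : X), z ∈ O1 → act g z ∈ O1 := by
    intro g z hz
    rw [hO1, Set.mem_toFinset] at hz ⊢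
    exact hstep x0 g z hz
  have hS2 : ∀ (g : Equiv.Perm (Fin 3)) (z : X), z ∈ O2 → act g z ∈ O2 := by
    intro g z hz
    rw [hO2, Set.mem_toFinset] at hz ⊢
    exact hstep y g z hz
  set v1 : X →₀ F := ∑ z ∈ O1, Finsupp.single z (1 : F) with hv1
  set v2 : X →₀ F := ∑ z ∈ O2, Finsupp.single z (1 : F) with hv2
  have hx0O1 : x0 ∈ O1 := by rw [hO1, Set.mem_toFinset]; exact MulAction.mem_orbit_self x0
  have hyO2 : y ∈ O2 := by rw [hO2, Set.mem_toFinset]; exact MulAction.mem_orbit_self y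
  have hyO1 : y ∉ O1 := by rw [hO1, Set.mem_toFinset]; exact hy
  have hx0O2 : x0 ∉ O2 := by
    rw [hO2, Set.mem_toFinset]
    intro hmem
    rw [MulAction.mem_orbit_iff] at hmem
    obtain ⟨h, hh⟩ := hmem
    exact hy (MulAction.mem_orbit_iff.mpr ⟨h⁻¹, by rw [← hh, smul_smul, inv_mul_cancel, one_smul]⟩)
  -- pull back the two fixed vectors
  obtain ⟨a, ha⟩ := fixed_is_scalar F (e.symm v1) (by
    intro g
    apply e.injective
    rw [he g, e.apply_symm_apply, hv1, hfixS O1 hS1 g])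
  obtain ⟨b, hb⟩ := fixed_is_scalar F (e.symm v2) (by
    intro g
    apply e.injective
    rw [he g, e.apply_symm_apply, hv2, hfixS O2 hS2 g])
  have hkey : b • v1 = a • v2 := by
    have heq : b • e.symm v1 = a • e.symm v2 := by
      rw [ha, hb, smul_smul, smul_smul, mul_comm]
    have h2 := congrArg e heq
    simp only [map_smul, LinearEquiv.apply_symm_apply] at h2
    exact h2
  have hb0 : b = 0 := by
    have h := congrArg (fun w : X →₀ F => w x0) hkey
    simp only [Finsupp.smul_apply] at h
    rw [hval O1 x0, hval O2 x0, if_pos hx0O1, if_neg hx0O2] at h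
    simpa using h
  have ha0 : a = 0 := by
    have h := congrArg (fun w : X →₀ F => w y) hkey
    simp only [Finsupp.smul_apply] at h
    rw [hval O1 y, hval O2 y, if_neg hyO1, if_pos hyO2] at h
    simpa using h.symm
  have hv10 : v1 = 0 := by
    have : e.symm v1 = 0 := by rw [ha, ha0, zero_smul]
    have h2 := congrArg e this
    rw [e.apply_symm_apply, map_zero] at h2
    exact h2
  have : (1 : F) = 0 := by
    have h := congrArg (fun w : X →₀ F => w x0) hv10
    simp only [Finsupp.coe_zero, Pi.zero_apply] at h
    rw [hval O1 x0, if_pos hx0O1] at h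
    exact h
  exact one_ne_zero this

end L3

namespace L3
variable (F : Type*) [Field F]

noncomputable def Phi :
    (lieSpace F 3 ⊗[F] Module.Dual F (lieSpace F 3)) ≃ₗ[F] (lieSpace F 3 →ₗ[F] lieSpace F 3) :=
  (TensorProduct.comm F (lieSpace F 3) (Module.Dual F (lieSpace F 3))).trans
    (dualTensorHomEquiv F (lieSpace F 3) (lieSpace F 3))

lemma Phi_tmul (v : lieSpace F 3) (f : Module.Dual F (lieSpace F 3)) :
    Phi F (v ⊗ₜ[F] f) = dualTensorHom F (lieSpace F 3) (lieSpace F 3) (f ⊗ₜ[F] v) := by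
  simp [Phi, dualTensorHomEquiv]

lemma Phi_equivariant (g : Equiv.Perm (Fin 3))
    (z : lieSpace F 3 ⊗[F] Module.Dual F (lieSpace F 3)) :
    Phi F (((lieRep F 3).tprod (lieRep F 3).dual) g z)
      = ((lieRep F 3).linHom (lieRep F 3)) g (Phi F z) := by
  induction z using TensorProduct.induction_on with
  | zero => simp
  | tmul v f =>
    have hc := Representation.dualTensorHom_comm (lieRep F 3) (lieRep F 3) g
    have hcc := congrArg
      (fun φ : Module.Dual F (lieSpace F 3) ⊗[F] lieSpace F 3 →ₗ[F] (lieSpace F 3 →ₗ[F] lieSpace F 3)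
        => φ (f ⊗ₜ[F] v)) hc
    simp only [LinearMap.comp_apply, TensorProduct.map_tmul] at hcc
    have h1 : ((lieRep F 3).tprod (lieRep F 3).dual) g (v ⊗ₜ[F] f)
        = (lieRep F 3 g v) ⊗ₜ[F] ((lieRep F 3).dual g f) := rfl
    rw [h1, Phi_tmul, Phi_tmul]
    exact hcc
  | add x y hx hy => simp only [map_add, hx, hy]

end L3

/-- Let `F` be an algebraically closed field of characteristic 3. Then the
`F𝔖_3`-module `Lie_F(3) ⊗ Lie_F(3)^*` (with diagonal `𝔖_3`-action and contragredient
dual) is not isomorphic to a permutation `F𝔖_3`-module. In particular (since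
`End_F(Lie_F(3)) ≅ Lie_F(3) ⊗ Lie_F(3)^*`), `Lie_F(3)` is not an endo-permutation
`F𝔖_3`-module. -/
theorem lie3_not_endo_permutation (F : Type*) [Field F] [IsAlgClosed F] [CharP F 3] :
    (¬ ∃ (X : Type) (_ : Finite X) (act : Equiv.Perm (Fin 3) →* Equiv.Perm X),
        RepIso (V := lieSpace F 3 ⊗[F] Module.Dual F (lieSpace F 3))
          ((lieRep F 3).tprod (lieRep F 3).dual) (permRep F (Equiv.Perm (Fin 3)) X act)) ∧
    (¬ ∃ (X : Type) (_ : Finite X) (act : Equiv.Perm (Fin 3) →* Equiv.Perm X),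
        RepIso (V := lieSpace F 3 →ₗ[F] lieSpace F 3) ((lieRep F 3).linHom (lieRep F 3)) (permRep F (Equiv.Perm (Fin 3)) X act)) := by
  constructor
  · rintro ⟨X, hX, act, e, he⟩
    haveI := hX
    apply L3.perm_contradiction F act ((L3.Phi F).symm.trans e)
    intro g v
    have h1 : (L3.Phi F).symm (((lieRep F 3).linHom (lieRep F 3)) g v)
        = ((lieRep F 3).tprod (lieRep F 3).dual) g ((L3.Phi F).symm v) := by
      apply (L3.Phi F).injective
      rw [LinearEquiv.apply_symm_apply, L3.Phi_equivariant, LinearEquiv.apply_symm_apply]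
    show e ((L3.Phi F).symm (((lieRep F 3).linHom (lieRep F 3)) g v)) = _
    rw [h1, he]
    rfl
  · rintro ⟨X, hX, act, e, he⟩
    haveI := hX
    exact L3.perm_contradiction F act e he
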